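/- For every Banach space Y, the pairs (ℓ₁, Y) and (c₀, Y) fail both property L_{o,p} and property L_{p,o}. -/

import Mathlib

/-- The pair `(X, Y)` has property `L_{o,p}`: for every `ε > 0` and `x ∈ S_X` there is
`η(ε, x) > 0` such that any norm-one operator `T` with `‖T x‖ > 1 - η` attains its norm at a
point `x₀ ∈ S_X` with `‖x₀ - x‖ < ε`. -/
def HasLop (𝕜 X Y : Type*) [RCLike 𝕜] [NormedAddCommGroup X] [NormedSpace 𝕜 X]
    [NormedAddCommGroup Y] [NormedSpace 𝕜 Y] : Prop :=
  ∀ ε : ℝ, 0 < ε → ∀ x : X, ‖x‖ = 1 →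
    ∃ η : ℝ, 0 < η ∧ ∀ T : X →L[𝕜] Y, ‖T‖ = 1 → 1 - η < ‖T x‖ →
      ∃ x₀ : X, ‖x₀‖ = 1 ∧ ‖T x₀‖ = 1 ∧ ‖x₀ - x‖ < ε

/-- The pair `(X, Y)` has property `L_{p,o}`: for every `ε > 0` and norm-one operator `T` there
is `η(ε, T) > 0` such that whenever `x ∈ S_X` satisfies `‖T x‖ > 1 - η`, there is a norm-one
operator `S` attaining its norm at `x` with `‖S - T‖ < ε`. -/
def HasLpo (𝕜 X Y : Type*) [RCLike 𝕜] [NormedAddCommGroup X] [NormedSpace 𝕜 X]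
    [NormedAddCommGroup Y] [NormedSpace 𝕜 Y] : Prop :=
  ∀ ε : ℝ, 0 < ε → ∀ T : X →L[𝕜] Y, ‖T‖ = 1 →
    ∃ η : ℝ, 0 < η ∧ ∀ x : X, ‖x‖ = 1 → 1 - η < ‖T x‖ →
      ∃ S : X →L[𝕜] Y, ‖S‖ = 1 ∧ ‖S x‖ = 1 ∧ ‖S - T‖ < ε

open ZeroAtInfty

section Aux
open Filter
variable {𝕜 : Type*} [RCLike 𝕜]

private lemma key_ineq {δ A B : ℝ} (hδ : 0 < δ) (hδ1 : δ ≤ 1) (hA : A ≤ 1)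
    (h : 1 ≤ (1 - δ) * A + δ * B) : 1 ≤ B := by nlinarith

/-! ### ℓ₁ vectors -/

noncomputable def l1two (a b : 𝕜) : lp (fun _ : ℕ => 𝕜) 1 := lp.single 1 0 a + lp.single 1 1 b

theorem l1single_norm (i : ℕ) (a : 𝕜) : ‖lp.single (E := fun _ : ℕ => 𝕜) 1 i a‖ = ‖a‖ := by
  have := lp.norm_single (E := fun _ : ℕ => 𝕜) (p := 1) (by norm_num) i a
  simpa using this

theorem l1two_apply (a b : 𝕜) (n : ℕ) :
    (l1two a b : ∀ _ : ℕ, 𝕜) n = if n = 0 then a else if n = 1 then b else 0 := by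
  simp only [l1two, lp.coeFn_add, Pi.add_apply, lp.single_apply, Pi.single_apply]
  rcases n with _ | _ | n <;> simp

theorem l1two_apply0 (a b : 𝕜) : (l1two a b : ∀ _ : ℕ, 𝕜) 0 = a := by simp [l1two_apply]
theorem l1two_apply1 (a b : 𝕜) : (l1two a b : ∀ _ : ℕ, 𝕜) 1 = b := by simp [l1two_apply]

theorem l1_coord_sum (f : lp (fun _ : ℕ => 𝕜) 1) :
    ‖(f : ∀ _ : ℕ, 𝕜) 0‖ + ‖(f : ∀ _ : ℕ, 𝕜) 1‖ ≤ ‖f‖ := by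
  have h := lp.sum_rpow_le_norm_rpow (p := 1) (by norm_num) f ({0, 1} : Finset ℕ)
  simpa using h

theorem l1two_norm (a b : 𝕜) : ‖l1two a b‖ = ‖a‖ + ‖b‖ := by
  refine le_antisymm ?_ ?_
  · refine (norm_add_le _ _).trans ?_
    rw [l1single_norm, l1single_norm]
  · have := l1_coord_sum (l1two a b)
    rwa [l1two_apply0, l1two_apply1] at this

theorem l1two_eq_smul (a b : 𝕜) : l1two a b = a • l1two 1 0 + b • l1two 0 1 := by
  apply lp.ext
  funext n
  simp only [lp.coeFn_add, Pi.add_apply, lp.coeFn_smul, Pi.smul_apply, smul_eq_mul, l1two_apply]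
  rcases n with _ | _ | n <;> simp

/-! ### c₀ vectors -/

noncomputable def c0two (a b : 𝕜) : C₀(ℕ, 𝕜) :=
  ⟨⟨fun n => if n = 0 then a else if n = 1 then b else 0, continuous_of_discreteTopology⟩, by
    rw [cocompact_eq_cofinite]
    refine tendsto_const_nhds.congr' ?_
    rw [Filter.eventuallyEq_iff_exists_mem]
    refine ⟨{n | 1 < n}, ?_, ?_⟩
    · rw [Filter.mem_cofinite]
      apply Set.Finite.subset (Set.finite_Iic 1)
      intro n hn
      simpa [Set.mem_Iic] using hn
    · intro n hn
      have hn' : 1 < n := hn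
      have h1 : n ≠ 0 := by omega
      have h2 : n ≠ 1 := by omega
      simp [h1, h2]⟩

theorem c0two_apply (a b : 𝕜) (n : ℕ) :
    (c0two a b) n = if n = 0 then a else if n = 1 then b else 0 := rfl

theorem c0two_apply0 (a b : 𝕜) : (c0two a b) 0 = a := rfl
theorem c0two_apply1 (a b : 𝕜) : (c0two a b) 1 = b := rfl

theorem c0_apply_le (f : C₀(ℕ, 𝕜)) (n : ℕ) : ‖f n‖ ≤ ‖f‖ := by
  rw [← ZeroAtInftyContinuousMap.norm_toBCF_eq_norm]
  exact BoundedContinuousFunction.norm_coe_le_norm f.toBCF n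

theorem c0_norm_le (f : C₀(ℕ, 𝕜)) {C : ℝ} (hC : 0 ≤ C) (h : ∀ n, ‖f n‖ ≤ C) : ‖f‖ ≤ C := by
  rw [← ZeroAtInftyContinuousMap.norm_toBCF_eq_norm]
  exact (BoundedContinuousFunction.norm_le hC).2 h

theorem c0two_norm_le (a b : 𝕜) : ‖c0two a b‖ ≤ max ‖a‖ ‖b‖ := by
  refine c0_norm_le _ (le_max_of_le_left (norm_nonneg _)) fun n => ?_
  rcases n with _ | _ | n
  · exact le_max_left _ _
  · exact le_max_right _ _
  · show ‖(0 : 𝕜)‖ ≤ _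
    simp [le_max_of_le_left (norm_nonneg a)]

theorem c0two_norm_one_left (a b : 𝕜) (ha : ‖a‖ = 1) (hb : ‖b‖ ≤ 1) : ‖c0two a b‖ = 1 := by
  refine le_antisymm ?_ ?_
  · refine (c0two_norm_le a b).trans ?_
    rw [ha]; exact max_le le_rfl hb
  · have := c0_apply_le (c0two a b) 0
    rwa [c0two_apply, if_pos rfl, ha] at this

theorem c0two_smul_add (a b c d e f : 𝕜) :
    a • c0two c d + b • c0two e f = c0two (a * c + b * e) (a * d + b * f) := by
  ext n
  simp only [ZeroAtInftyContinuousMap.coe_add, Pi.add_apply,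
    ZeroAtInftyContinuousMap.coe_smul, Pi.smul_apply, smul_eq_mul, c0two_apply]
  rcases n with _ | _ | n <;> simp

/-! ### Functionals -/

noncomputable def l1phi (c d : 𝕜) : lp (fun _ : ℕ => 𝕜) 1 →L[𝕜] 𝕜 :=
  LinearMap.mkContinuous
    { toFun := fun a => c * (a : ∀ _ : ℕ, 𝕜) 0 + d * (a : ∀ _ : ℕ, 𝕜) 1
      map_add' := fun a b => by simp [lp.coeFn_add]; ring
      map_smul' := fun r a => by simp [lp.coeFn_smul]; ring }
    (max ‖c‖ ‖d‖)
    (fun a => by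
      simp only [LinearMap.coe_mk, AddHom.coe_mk]
      calc ‖c * (a : ∀ _ : ℕ, 𝕜) 0 + d * (a : ∀ _ : ℕ, 𝕜) 1‖
          ≤ ‖c‖ * ‖(a : ∀ _ : ℕ, 𝕜) 0‖ + ‖d‖ * ‖(a : ∀ _ : ℕ, 𝕜) 1‖ := by
            refine (norm_add_le _ _).trans ?_
            simp [norm_mul]
        _ ≤ max ‖c‖ ‖d‖ * (‖(a : ∀ _ : ℕ, 𝕜) 0‖ + ‖(a : ∀ _ : ℕ, 𝕜) 1‖) := by
            rw [mul_add]
            gcongr <;> [exact le_max_left _ _; exact le_max_right _ _]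
        _ ≤ max ‖c‖ ‖d‖ * ‖a‖ := by
            refine mul_le_mul_of_nonneg_left ?_ (le_max_of_le_left (norm_nonneg _))
            exact l1_coord_sum a)

theorem l1phi_apply (c d : 𝕜) (a : lp (fun _ : ℕ => 𝕜) 1) :
    l1phi c d a = c * (a : ∀ _ : ℕ, 𝕜) 0 + d * (a : ∀ _ : ℕ, 𝕜) 1 := rfl

theorem l1phi_norm_le (c d : 𝕜) : ‖l1phi c d‖ ≤ max ‖c‖ ‖d‖ :=
  LinearMap.mkContinuous_norm_le _ (le_max_of_le_left (norm_nonneg _)) _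

noncomputable def c0phi (c d : 𝕜) : C₀(ℕ, 𝕜) →L[𝕜] 𝕜 :=
  LinearMap.mkContinuous
    { toFun := fun f => c * f 0 + d * f 1
      map_add' := fun f g => by simp; ring
      map_smul' := fun r f => by simp; ring }
    (‖c‖ + ‖d‖)
    (fun f => by
      simp only [LinearMap.coe_mk, AddHom.coe_mk]
      calc ‖c * f 0 + d * f 1‖ ≤ ‖c‖ * ‖f 0‖ + ‖d‖ * ‖f 1‖ := by
            refine (norm_add_le _ _).trans ?_; simp [norm_mul]
        _ ≤ ‖c‖ * ‖f‖ + ‖d‖ * ‖f‖ := by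
            gcongr
            · exact c0_apply_le f 0
            · exact c0_apply_le f 1
        _ = (‖c‖ + ‖d‖) * ‖f‖ := by ring)

theorem c0phi_apply (c d : 𝕜) (f : C₀(ℕ, 𝕜)) : c0phi c d f = c * f 0 + d * f 1 := rfl

theorem c0phi_norm_le (c d : 𝕜) : ‖c0phi c d‖ ≤ ‖c‖ + ‖d‖ :=
  LinearMap.mkContinuous_norm_le _ (by positivity) _


/-! ### Rank-one operators -/

variable {Y : Type*} [NormedAddCommGroup Y] [NormedSpace 𝕜 Y]

noncomputable def l1T (c d : 𝕜) (y₀ : Y) : lp (fun _ : ℕ => 𝕜) 1 →L[𝕜] Y :=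
  (l1phi c d).smulRight y₀

theorem l1T_apply (c d : 𝕜) (y₀ : Y) (a : lp (fun _ : ℕ => 𝕜) 1) :
    l1T c d y₀ a = (c * (a : ∀ _ : ℕ, 𝕜) 0 + d * (a : ∀ _ : ℕ, 𝕜) 1) • y₀ := rfl

theorem l1T_norm_apply (c d : 𝕜) {y₀ : Y} (hy : ‖y₀‖ = 1) (a : lp (fun _ : ℕ => 𝕜) 1) :
    ‖l1T c d y₀ a‖ = ‖c * (a : ∀ _ : ℕ, 𝕜) 0 + d * (a : ∀ _ : ℕ, 𝕜) 1‖ := by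
  rw [l1T_apply, norm_smul, hy, mul_one]

theorem l1T_norm_le (c d : 𝕜) {y₀ : Y} (hy : ‖y₀‖ = 1) : ‖l1T c d y₀‖ ≤ max ‖c‖ ‖d‖ := by
  rw [l1T, ContinuousLinearMap.norm_smulRight_apply, hy, mul_one]
  exact l1phi_norm_le c d

noncomputable def c0T (c d : 𝕜) (y₀ : Y) : C₀(ℕ, 𝕜) →L[𝕜] Y :=
  (c0phi c d).smulRight y₀

theorem c0T_apply (c d : 𝕜) (y₀ : Y) (f : C₀(ℕ, 𝕜)) :
    c0T c d y₀ f = (c * f 0 + d * f 1) • y₀ := rfl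

theorem c0T_norm_apply (c d : 𝕜) {y₀ : Y} (hy : ‖y₀‖ = 1) (f : C₀(ℕ, 𝕜)) :
    ‖c0T c d y₀ f‖ = ‖c * f 0 + d * f 1‖ := by
  rw [c0T_apply, norm_smul, hy, mul_one]

theorem c0T_norm_le (c d : 𝕜) {y₀ : Y} (hy : ‖y₀‖ = 1) : ‖c0T c d y₀‖ ≤ ‖c‖ + ‖d‖ := by
  rw [c0T, ContinuousLinearMap.norm_smulRight_apply, hy, mul_one]
  exact c0phi_norm_le c d

end Aux

section Main

variable {𝕜 Y : Type*} [RCLike 𝕜] [NormedAddCommGroup Y] [NormedSpace 𝕜 Y]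

theorem notLop_l1 {y₀ : Y} (hy : ‖y₀‖ = 1) : ¬ HasLop 𝕜 (lp (fun _ : ℕ => 𝕜) 1) Y := by
  intro H
  obtain ⟨η, hη, hmain⟩ := H (1 / 2) (by norm_num) (l1two (𝕜 := 𝕜) 1 0)
    (by rw [l1two_norm]; simp)
  set δ : ℝ := min η 1 / 2 with hδdef
  have hδ0 : 0 < δ := by positivity
  have hδ1 : δ ≤ 1 / 2 := by
    rw [hδdef]; have := min_le_right η 1; linarith
  have hδη : δ < η := by
    rw [hδdef]; have := min_le_left η 1; linarith
  set c : 𝕜 := ((1 - δ : ℝ) : 𝕜) with hc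
  have hcn : ‖c‖ = 1 - δ := by
    rw [hc, RCLike.norm_ofReal, abs_of_nonneg (by linarith)]
  have hTnorm : ‖l1T c 1 y₀‖ = 1 := by
    refine le_antisymm ((l1T_norm_le c 1 hy).trans ?_) ?_
    · rw [hcn, norm_one]
      exact max_le (by linarith) le_rfl
    · have h1 := (l1T c 1 y₀).le_opNorm (l1two (𝕜 := 𝕜) 0 1)
      rw [l1T_norm_apply c 1 hy, l1two_apply0, l1two_apply1, l1two_norm] at h1
      simp only [mul_zero, mul_one, zero_add, norm_one, norm_zero, add_zero, zero_add] at h1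
      linarith [h1]
  have hTx : ‖l1T c 1 y₀ (l1two (𝕜 := 𝕜) 1 0)‖ = 1 - δ := by
    rw [l1T_norm_apply c 1 hy, l1two_apply0, l1two_apply1, mul_one, mul_zero, add_zero, hcn]
  obtain ⟨x₀, hx₀n, hTx₀, hclose⟩ := hmain _ hTnorm (by rw [hTx]; linarith)
  set A := ‖(x₀ : ∀ _ : ℕ, 𝕜) 0‖ with hA
  set B := ‖(x₀ : ∀ _ : ℕ, 𝕜) 1‖ with hB
  have hAB : A + B ≤ 1 := by rw [← hx₀n]; exact l1_coord_sum x₀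
  have h1 : (1 : ℝ) ≤ (1 - δ) * A + B := by
    rw [l1T_norm_apply c 1 hy] at hTx₀
    calc (1 : ℝ) = ‖c * (x₀ : ∀ _ : ℕ, 𝕜) 0 + 1 * (x₀ : ∀ _ : ℕ, 𝕜) 1‖ := hTx₀.symm
      _ ≤ ‖c‖ * A + B := by
          refine (norm_add_le _ _).trans ?_
          simp [norm_mul, hA, hB]
      _ = (1 - δ) * A + B := by rw [hcn]
  have hA0 : A = 0 := by
    have hAnn : 0 ≤ A := norm_nonneg _
    nlinarith
  have hx₀0 : (x₀ : ∀ _ : ℕ, 𝕜) 0 = 0 := norm_eq_zero.mp hA0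
  have hge : (1 : ℝ) ≤ ‖x₀ - l1two 1 0‖ := by
    have h := lp.norm_apply_le_norm (E := fun _ : ℕ => 𝕜) (p := 1) one_ne_zero
      (x₀ - l1two 1 0) 0
    rw [lp.coeFn_sub, Pi.sub_apply, hx₀0, l1two_apply0] at h
    simpa using h
  linarith

theorem notLpo_l1 {y₀ : Y} (hy : ‖y₀‖ = 1) : ¬ HasLpo 𝕜 (lp (fun _ : ℕ => 𝕜) 1) Y := by
  intro H
  have hTnorm : ‖l1T (1 : 𝕜) 0 y₀‖ = 1 := by
    refine le_antisymm ((l1T_norm_le 1 0 hy).trans (by simp)) ?_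
    have h1 := (l1T (1 : 𝕜) 0 y₀).le_opNorm (l1two (𝕜 := 𝕜) 1 0)
    rw [l1T_norm_apply 1 0 hy, l1two_apply0, l1two_apply1, l1two_norm] at h1
    simp only [mul_zero, mul_one, one_mul, add_zero, norm_one, norm_zero] at h1
    linarith [h1]
  obtain ⟨η, hη, hmain⟩ := H (1 / 2) (by norm_num) _ hTnorm
  set δ : ℝ := min η 1 / 2 with hδdef
  have hδ0 : 0 < δ := by positivity
  have hδ1 : δ ≤ 1 / 2 := by
    rw [hδdef]; have := min_le_right η 1; linarith
  have hδη : δ < η := by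
    rw [hδdef]; have := min_le_left η 1; linarith
  set x : lp (fun _ : ℕ => 𝕜) 1 := l1two ((1 - δ : ℝ) : 𝕜) ((δ : ℝ) : 𝕜) with hx
  have hxn : ‖x‖ = 1 := by
    rw [hx, l1two_norm, RCLike.norm_ofReal, RCLike.norm_ofReal,
      abs_of_nonneg (by linarith), abs_of_nonneg (by linarith)]
    ring
  have hTx : ‖l1T (1 : 𝕜) 0 y₀ x‖ = 1 - δ := by
    rw [l1T_norm_apply 1 0 hy, hx, l1two_apply0, l1two_apply1]
    simp only [one_mul, zero_mul, add_zero]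
    rw [RCLike.norm_ofReal, abs_of_nonneg (by linarith)]
  obtain ⟨S, hSn, hSx, hclose⟩ := hmain x hxn (by rw [hTx]; linarith)
  have hxdecomp : x = ((1 - δ : ℝ) : 𝕜) • l1two 1 0 + ((δ : ℝ) : 𝕜) • l1two 0 1 :=
    l1two_eq_smul _ _
  have hSe0 : ‖S (l1two (𝕜 := 𝕜) 1 0)‖ ≤ 1 := by
    have h := S.le_opNorm (l1two (𝕜 := 𝕜) 1 0)
    rw [hSn, l1two_norm] at h
    simpa using h
  have hSe1 : (1 : ℝ) ≤ ‖S (l1two (𝕜 := 𝕜) 0 1)‖ := by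
    refine key_ineq hδ0 (by linarith) hSe0 ?_
    calc (1 : ℝ) = ‖S x‖ := hSx.symm
      _ ≤ (1 - δ) * ‖S (l1two (𝕜 := 𝕜) 1 0)‖ + δ * ‖S (l1two (𝕜 := 𝕜) 0 1)‖ := by
          rw [hxdecomp, map_add, map_smul, map_smul]
          refine (norm_add_le _ _).trans ?_
          rw [norm_smul, norm_smul, RCLike.norm_ofReal, RCLike.norm_ofReal,
            abs_of_nonneg (by linarith : (0:ℝ) ≤ 1 - δ), abs_of_nonneg (by linarith : (0:ℝ) ≤ δ)]
  have hTe1 : l1T (1 : 𝕜) 0 y₀ (l1two (𝕜 := 𝕜) 0 1) = 0 := by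
    rw [l1T_apply, l1two_apply0, l1two_apply1]
    simp
  have hdiff : (1 : ℝ) ≤ ‖S - l1T (1 : 𝕜) 0 y₀‖ := by
    have h := (S - l1T (1 : 𝕜) 0 y₀).le_opNorm (l1two (𝕜 := 𝕜) 0 1)
    rw [ContinuousLinearMap.sub_apply, hTe1, sub_zero, l1two_norm] at h
    simp only [norm_zero, norm_one, zero_add, mul_one] at h
    linarith
  linarith

theorem notLop_c0 {y₀ : Y} (hy : ‖y₀‖ = 1) : ¬ HasLop 𝕜 (C₀(ℕ, 𝕜)) Y := by
  intro H
  obtain ⟨η, hη, hmain⟩ := H (1 / 2) (by norm_num) (c0two (𝕜 := 𝕜) 1 0)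
    (c0two_norm_one_left 1 0 norm_one (by simp))
  set δ : ℝ := min η 1 / 2 with hδdef
  have hδ0 : 0 < δ := by positivity
  have hδ1 : δ ≤ 1 / 2 := by
    rw [hδdef]; have := min_le_right η 1; linarith
  have hδη : δ < η := by
    rw [hδdef]; have := min_le_left η 1; linarith
  set c : 𝕜 := ((1 - δ : ℝ) : 𝕜) with hc
  set d : 𝕜 := ((δ : ℝ) : 𝕜) with hd
  have hcn : ‖c‖ = 1 - δ := by
    rw [hc, RCLike.norm_ofReal, abs_of_nonneg (by linarith)]
  have hdn : ‖d‖ = δ := by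
    rw [hd, RCLike.norm_ofReal, abs_of_nonneg (by linarith)]
  have hcd1 : c + d = 1 := by
    rw [hc, hd, ← RCLike.ofReal_add]; norm_num
  have hTnorm : ‖c0T c d y₀‖ = 1 := by
    refine le_antisymm ((c0T_norm_le c d hy).trans ?_) ?_
    · rw [hcn, hdn]; linarith
    · have h1 := (c0T c d y₀).le_opNorm (c0two (𝕜 := 𝕜) 1 1)
      rw [c0T_norm_apply c d hy, c0two_norm_one_left 1 1 norm_one (by simp), mul_one,
        c0two_apply0, c0two_apply1, mul_one, mul_one, hcd1, norm_one] at h1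
      exact h1
  have hTx : ‖c0T c d y₀ (c0two (𝕜 := 𝕜) 1 0)‖ = 1 - δ := by
    rw [c0T_norm_apply c d hy, c0two_apply0, c0two_apply1, mul_one, mul_zero, add_zero, hcn]
  obtain ⟨x₀, hx₀n, hTx₀, hclose⟩ := hmain _ hTnorm (by rw [hTx]; linarith)
  have hB : (1 : ℝ) ≤ ‖x₀ 1‖ := by
    refine key_ineq hδ0 (by linarith) ((c0_apply_le x₀ 0).trans_eq hx₀n) ?_
    rw [c0T_norm_apply c d hy] at hTx₀
    calc (1 : ℝ) = ‖c * x₀ 0 + d * x₀ 1‖ := hTx₀.symm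
      _ ≤ ‖c‖ * ‖x₀ 0‖ + ‖d‖ * ‖x₀ 1‖ := by
          refine (norm_add_le _ _).trans ?_; simp [norm_mul]
      _ = (1 - δ) * ‖x₀ 0‖ + δ * ‖x₀ 1‖ := by rw [hcn, hdn]
  have hge : (1 : ℝ) ≤ ‖x₀ - c0two 1 0‖ := by
    have h := c0_apply_le (x₀ - c0two (𝕜 := 𝕜) 1 0) 1
    rw [ZeroAtInftyContinuousMap.coe_sub, Pi.sub_apply, c0two_apply1, sub_zero] at h
    linarith
  linarith

theorem notLpo_c0 {y₀ : Y} (hy : ‖y₀‖ = 1) : ¬ HasLpo 𝕜 (C₀(ℕ, 𝕜)) Y := by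
  intro H
  set c : 𝕜 := ((1 / 2 : ℝ) : 𝕜) with hc
  have hcn : ‖c‖ = 1 / 2 := by rw [hc, RCLike.norm_ofReal]; norm_num
  have hcc1 : c + c = 1 := by
    rw [hc, ← RCLike.ofReal_add]; norm_num
  have hTnorm : ‖c0T c c y₀‖ = 1 := by
    refine le_antisymm ((c0T_norm_le c c hy).trans (by rw [hcn]; norm_num)) ?_
    have h1 := (c0T c c y₀).le_opNorm (c0two (𝕜 := 𝕜) 1 1)
    rw [c0T_norm_apply c c hy, c0two_norm_one_left 1 1 norm_one (by simp), mul_one,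
      c0two_apply0, c0two_apply1, mul_one, hcc1, norm_one] at h1
    exact h1
  obtain ⟨η, hη, hmain⟩ := H (1 / 2) (by norm_num) _ hTnorm
  set δ : ℝ := min η 1 with hδdef
  have hδ0 : 0 < δ := lt_min hη one_pos
  have hδ1 : δ ≤ 1 := min_le_right η 1
  have hδη : δ ≤ η := min_le_left η 1
  set x : C₀(ℕ, 𝕜) := c0two 1 ((1 - δ : ℝ) : 𝕜) with hx
  have hxn : ‖x‖ = 1 := by
    refine c0two_norm_one_left _ _ norm_one ?_
    rw [RCLike.norm_ofReal, abs_of_nonneg (by linarith)]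
    linarith
  have hTx : ‖c0T c c y₀ x‖ = 1 - δ / 2 := by
    rw [c0T_norm_apply c c hy, hx, c0two_apply0, c0two_apply1, mul_one, hc,
      ← RCLike.ofReal_mul, ← RCLike.ofReal_add, RCLike.norm_ofReal]
    rw [show (1 / 2 + 1 / 2 * (1 - δ) : ℝ) = 1 - δ / 2 by ring]
    rw [abs_of_nonneg (by linarith)]
  obtain ⟨S, hSn, hSx, hclose⟩ := hmain x hxn (by rw [hTx]; linarith)
  set u : C₀(ℕ, 𝕜) := c0two 1 1 with hu
  set v : C₀(ℕ, 𝕜) := c0two 1 (-1) with hv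
  have hun : ‖u‖ = 1 := c0two_norm_one_left 1 1 norm_one (by simp)
  have hvn : ‖v‖ = 1 := c0two_norm_one_left 1 (-1) norm_one (by simp)
  set a : 𝕜 := ((1 - δ / 2 : ℝ) : 𝕜) with ha
  set b : 𝕜 := ((δ / 2 : ℝ) : 𝕜) with hb
  have han : ‖a‖ = 1 - δ / 2 := by
    rw [ha, RCLike.norm_ofReal, abs_of_nonneg (by linarith)]
  have hbn : ‖b‖ = δ / 2 := by
    rw [hb, RCLike.norm_ofReal, abs_of_nonneg (by linarith)]
  have hxdecomp : x = a • u + b • v := by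
    rw [hu, hv, c0two_smul_add, hx]
    congr 1
    · rw [ha, hb, mul_one, mul_one, ← RCLike.ofReal_add,
        show (1 - δ / 2 + δ / 2 : ℝ) = 1 by ring, RCLike.ofReal_one]
    · rw [ha, hb, mul_one, mul_neg_one, ← RCLike.ofReal_neg, ← RCLike.ofReal_add,
        show (1 - δ / 2 + -(δ / 2) : ℝ) = 1 - δ by ring]
  have hSu : ‖S u‖ ≤ 1 := by
    have h := S.le_opNorm u
    rw [hSn, hun] at h
    simpa using h
  have hSv : (1 : ℝ) ≤ ‖S v‖ := by
    refine key_ineq (by linarith : (0:ℝ) < δ / 2) (by linarith) hSu ?_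
    calc (1 : ℝ) = ‖S x‖ := hSx.symm
      _ ≤ (1 - δ / 2) * ‖S u‖ + δ / 2 * ‖S v‖ := by
          rw [hxdecomp, map_add, map_smul, map_smul]
          refine (norm_add_le _ _).trans ?_
          rw [norm_smul, norm_smul, han, hbn]
  have hTv : c0T c c y₀ v = 0 := by
    rw [c0T_apply, hv, c0two_apply0, c0two_apply1, mul_one, mul_neg_one]
    simp
  have hdiff : (1 : ℝ) ≤ ‖S - c0T c c y₀‖ := by
    have h := (S - c0T c c y₀).le_opNorm v
    rw [ContinuousLinearMap.sub_apply, hTv, sub_zero, hvn, mul_one] at h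
    linarith
  linarith

end Main

/-- For every nontrivial Banach space `Y`, the pairs `(ℓ₁, Y)` and `(c₀, Y)`
fail both property `L_{o,p}` and property `L_{p,o}`. -/
theorem l1_c0_fail_lop_lpo (𝕜 Y : Type*) [RCLike 𝕜] [NormedAddCommGroup Y]
    [NormedSpace 𝕜 Y] [CompleteSpace Y] (hY : ∃ y₀ : Y, ‖y₀‖ = 1) :
    ¬ HasLop 𝕜 (lp (fun _ : ℕ => 𝕜) 1) Y ∧ ¬ HasLpo 𝕜 (lp (fun _ : ℕ => 𝕜) 1) Y ∧
    ¬ HasLop 𝕜 (C₀(ℕ, 𝕜)) Y ∧ ¬ HasLpo 𝕜 (C₀(ℕ, 𝕜)) Y := by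
  obtain ⟨y₀, hy⟩ := hY
  exact ⟨notLop_l1 hy, notLpo_l1 hy, notLop_c0 hy, notLpo_c0 hy⟩
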